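/- arXiv:2601.12350 — 7 statements merged into one kernel-verified Lean document; each statement's English description precedes it below -/
import Mathlib

section
/- Suppose y ∈ C¹[0,T] satisfies y(0) = 0 and y'(t) ≤ A + B·y(t)² for all t ∈ [0,T], where A, B, T > 0 and √(AB)·T ≤ π/4. Then y(t) ≤ 2At for all t ∈ [0,T]. -/
open Real Set

lemma tan_le_two_mul_aux {x : ℝ} (hx : x ∈ Set.Icc 0 (Real.pi/4)) :
    Real.tan x ≤ 2 * x := by
  have hpi := Real.pi_pos
  have hcosne : ∀ z ∈ Set.Icc (0:ℝ) (Real.pi/4), Real.cos z ≠ 0 := by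
    intro z hz
    have : 0 < Real.cos z := Real.cos_pos_of_mem_Ioo ⟨by linarith [hz.1], by linarith [hz.2]⟩
    linarith
  have hmono : MonotoneOn (fun z => 2*z - Real.tan z) (Set.Icc 0 (Real.pi/4)) := by
    apply monotoneOn_of_hasDerivWithinAt_nonneg (convex_Icc _ _)
      (f' := fun z => 2 - 1 / Real.cos z ^ 2)
    · apply ContinuousOn.sub (by fun_prop)
      apply ContinuousOn.congr (f := fun z => Real.sin z / Real.cos z)
        (Real.continuousOn_sin.div Real.continuousOn_cos hcosne)
      intro z _; exact Real.tan_eq_sin_div_cos z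
    · intro z hz
      rw [interior_Icc] at hz
      have hz' : z ∈ Set.Icc (0:ℝ) (Real.pi/4) := ⟨hz.1.le, hz.2.le⟩
      exact (((hasDerivAt_id z).const_mul 2).sub
        (Real.hasDerivAt_tan (hcosne z hz'))).hasDerivWithinAt.congr_deriv (by ring)
    · intro z hz
      rw [interior_Icc] at hz
      have h1 : Real.cos (Real.pi/4) ≤ Real.cos z :=
        Real.cos_le_cos_of_nonneg_of_le_pi hz.1.le (by linarith [hz.2]) (by linarith [hz.2])
      rw [Real.cos_pi_div_four] at h1
      have h2 : (Real.sqrt 2)^2 = 2 := Real.sq_sqrt (by norm_num)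
      have h3 : (1:ℝ)/2 ≤ Real.cos z ^ 2 := by nlinarith [Real.sqrt_nonneg 2]
      have h4 : 1 / Real.cos z ^ 2 ≤ 2 := by
        rw [div_le_iff₀ (by nlinarith)]; linarith
      linarith
  have h0 : (0:ℝ) ∈ Set.Icc (0:ℝ) (Real.pi/4) := ⟨le_refl 0, by linarith⟩
  have := hmono h0 hx hx.1
  simp only [Real.tan_zero] at this
  linarith

theorem stmt_3 (A B T : ℝ) (hA : 0 < A) (hB : 0 < B) (hT : 0 < T)
    (hABT : Real.sqrt (A * B) * T ≤ Real.pi / 4)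
    (y y' : ℝ → ℝ)
    (hderiv : ∀ t ∈ Set.Icc (0 : ℝ) T, HasDerivAt y (y' t) t)
    (hcont : ContinuousOn y' (Set.Icc 0 T))
    (hy0 : y 0 = 0)
    (hineq : ∀ t ∈ Set.Icc (0 : ℝ) T, y' t ≤ A + B * (y t) ^ 2) :
    ∀ t ∈ Set.Icc (0 : ℝ) T, y t ≤ 2 * A * t := by
  have hpi := Real.pi_pos
  set s := Real.sqrt (A * B) with hs_def
  set c := Real.sqrt (B / A) with hc_def
  have hs_pos : 0 < s := Real.sqrt_pos.mpr (by positivity)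
  have hc_pos : 0 < c := Real.sqrt_pos.mpr (by positivity)
  have hc_sq : c ^ 2 = B / A := Real.sq_sqrt (by positivity)
  have hs_sq : s ^ 2 = A * B := Real.sq_sqrt (by positivity)
  have hAc : A * c = s := by
    have h1 : (A * c) ^ 2 = s ^ 2 := by
      rw [hs_sq]; field_simp [mul_pow, hc_sq]; rw [hc_sq]; field_simp
    nlinarith [mul_pos hA hc_pos]
  -- the function g = arctan (c * y) minus s*t argument
  have hgderiv : ∀ t ∈ Set.Icc (0:ℝ) T,
      HasDerivAt (fun u => s * u - Real.arctan (c * y u))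
        (s - (1 / (1 + (c * y t) ^ 2)) * (c * y' t)) t := by
    intro t ht
    have h1 : HasDerivAt (fun u => c * y u) (c * y' t) t := (hderiv t ht).const_mul c
    have h2 : HasDerivAt Real.arctan (1 / (1 + (c * y t) ^ 2)) (c * y t) :=
      Real.hasDerivAt_arctan (c * y t)
    have := ((hasDerivAt_id t).const_mul s).sub (h2.comp t h1)
    exact this.congr_deriv (by ring)
  have hmono : MonotoneOn (fun u => s * u - Real.arctan (c * y u)) (Set.Icc 0 T) := by
    apply monotoneOn_of_hasDerivWithinAt_nonneg (convex_Icc _ _)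
      (f' := fun t => s - (1 / (1 + (c * y t) ^ 2)) * (c * y' t))
    · intro t ht
      exact ((hgderiv t ht).continuousAt).continuousWithinAt
    · intro t ht
      rw [interior_Icc] at ht
      exact (hgderiv t ⟨ht.1.le, ht.2.le⟩).hasDerivWithinAt
    · intro t ht
      rw [interior_Icc] at ht
      have ht' : t ∈ Set.Icc (0:ℝ) T := ⟨ht.1.le, ht.2.le⟩
      have hD : (0:ℝ) < 1 + (c * y t) ^ 2 := by positivity
      have key : c * y' t ≤ s * (1 + (c * y t) ^ 2) := by
        have h1 : y' t ≤ A + B * (y t) ^ 2 := hineq t ht'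
        have h2 : c * y' t ≤ c * (A + B * (y t) ^ 2) :=
          mul_le_mul_of_nonneg_left h1 hc_pos.le
        have h3 : c * (A + B * (y t) ^ 2) = s * (1 + (c * y t) ^ 2) := by
          have hB' : c * B = s * c ^ 2 := by
            rw [← hAc]; rw [hc_sq]; field_simp
          calc c * (A + B * (y t) ^ 2) = A * c + (c * B) * (y t) ^ 2 := by ring
            _ = s + (s * c ^ 2) * (y t) ^ 2 := by rw [hAc, hB']
            _ = s * (1 + (c * y t) ^ 2) := by ring
        linarith
      rw [sub_nonneg, mul_comm, ← div_eq_mul_one_div, div_le_iff₀ hD]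
      linarith
  intro t ht
  have harc : Real.arctan (c * y t) ≤ s * t := by
    have := hmono (Set.left_mem_Icc.mpr hT.le) ht ht.1
    simp only [hy0, mul_zero, Real.arctan_zero, sub_zero] at this
    linarith
  have hst_nonneg : 0 ≤ s * t := mul_nonneg hs_pos.le ht.1
  have hst_le : s * t ≤ Real.pi / 4 := by
    have : s * t ≤ s * T := mul_le_mul_of_nonneg_left ht.2 hs_pos.le
    linarith
  have htan : c * y t ≤ Real.tan (s * t) := by
    have h1 : c * y t = Real.tan (Real.arctan (c * y t)) := (Real.tan_arctan _).symm
    rw [h1]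
    apply Real.strictMonoOn_tan.monotoneOn
    · exact ⟨Real.neg_pi_div_two_lt_arctan _, Real.arctan_lt_pi_div_two _⟩
    · constructor <;> [linarith; linarith]
    · exact harc
  have htan2 : Real.tan (s * t) ≤ 2 * (s * t) :=
    tan_le_two_mul_aux ⟨hst_nonneg, hst_le⟩
  have : c * y t ≤ 2 * (A * c) * t := by rw [hAc]; linarith
  nlinarith [hc_pos]
end

section
/- Let f : (0,∞) → ℝ be C², with f > 0, f' > 0, f'' > 0 on (0,∞), and suppose F(u) := ∫_u^∞ ds/f(s) is finite for every u > 0. If there exist constants q₁, q₂ > 0 such that q₁ ≤ f'(u)²/(f(u)·f''(u)) ≤ q₂ for all u > 0, then q₁/f'(u) ≤ F(u) ≤ q₂/f'(u) for all u > 0, i.e., q₁ ≤ f'(u)·F(u) ≤ q₂ for all u > 0. -/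
open MeasureTheory Set Filter intervalIntegral

theorem stmt_5 (f f' f'' : ℝ → ℝ)
    (hf' : ∀ u > (0 : ℝ), HasDerivAt f (f' u) u)
    (hf'' : ∀ u > (0 : ℝ), HasDerivAt f' (f'' u) u)
    (hf''c : ContinuousOn f'' (Set.Ioi 0))
    (hfpos : ∀ u > (0 : ℝ), 0 < f u)
    (hf'pos : ∀ u > (0 : ℝ), 0 < f' u)
    (hf''pos : ∀ u > (0 : ℝ), 0 < f'' u)
    (hint : ∀ u > (0 : ℝ), MeasureTheory.IntegrableOn (fun s => 1 / f s) (Set.Ioi u))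
    (q₁ q₂ : ℝ) (hq₁ : 0 < q₁) (hq₂ : 0 < q₂)
    (hq : ∀ u > (0 : ℝ),
      q₁ ≤ (f' u) ^ 2 / (f u * f'' u) ∧ (f' u) ^ 2 / (f u * f'' u) ≤ q₂) :
    ∀ u > (0 : ℝ),
      q₁ ≤ f' u * (∫ s in Set.Ioi u, 1 / f s) ∧
        f' u * (∫ s in Set.Ioi u, 1 / f s) ≤ q₂ := by
  set F : ℝ → ℝ := fun u => ∫ s in Set.Ioi u, 1 / f s with hFdef
  -- continuity of 1/f on Ioi 0
  have h1fc : ContinuousOn (fun s => 1 / f s) (Ioi (0:ℝ)) := by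
    intro x hx
    exact ((continuousAt_const.div (hf' x hx).continuousAt
      (ne_of_gt (hfpos x hx)))).continuousWithinAt
  -- splitting lemma
  have hsplit : ∀ a x : ℝ, 0 < a → a ≤ x →
      F a = (∫ s in a..x, 1 / f s) + F x := by
    intro a x ha hax
    have hx : (0:ℝ) < x := lt_of_lt_of_le ha hax
    have h1 : IntegrableOn (fun s => 1 / f s) (Ioc a x) :=
      (hint a ha).mono_set Ioc_subset_Ioi_self
    have h2 : IntegrableOn (fun s => 1 / f s) (Ioi x) := hint x hx
    rw [intervalIntegral.integral_of_le hax]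
    rw [hFdef]
    simp only
    rw [← setIntegral_union (Ioc_disjoint_Ioi le_rfl) measurableSet_Ioi h1 h2,
      Ioc_union_Ioi_eq_Ioi hax]
  -- F has derivative -(1/f u) at every u > 0
  have hFd : ∀ u > (0:ℝ), HasDerivAt F (-(1 / f u)) u := by
    intro u hu
    set a := u / 2 with ha_def
    have ha : 0 < a := by positivity
    have hau : a < u := by
      rw [ha_def]; linarith
    have hsub : uIcc a u ⊆ Ioi (0:ℝ) := by
      rw [uIcc_of_le hau.le]
      exact fun x hx => lt_of_lt_of_le ha hx.1
    have hii : IntervalIntegrable (fun s => 1 / f s) volume a u :=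
      (h1fc.mono hsub).intervalIntegrable
    have hms : StronglyMeasurableAtFilter (fun s => 1 / f s) (nhds u) volume :=
      h1fc.stronglyMeasurableAtFilter isOpen_Ioi u hu
    have hca : ContinuousAt (fun s => 1 / f s) u :=
      continuousAt_const.div (hf' u hu).continuousAt (ne_of_gt (hfpos u hu))
    have h1 : HasDerivAt (fun x => ∫ s in a..x, 1 / f s) (1 / f u) u :=
      intervalIntegral.integral_hasDerivAt_right hii hms hca
    have h2 : HasDerivAt (fun x => F a - ∫ s in a..x, 1 / f s) (-(1 / f u)) u :=
      h1.const_sub (F a)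
    refine h2.congr_of_eventuallyEq ?_
    filter_upwards [isOpen_Ioi.mem_nhds (show u ∈ Ioi a from hau)] with x hx
    have := hsplit a x ha (le_of_lt hx)
    linarith
  -- f' is monotone on Ioi 0
  have hf'mono : MonotoneOn f' (Ioi (0:ℝ)) := by
    refine monotoneOn_of_hasDerivWithinAt_nonneg (convex_Ioi 0)
      (fun x hx => (hf'' x hx).continuousAt.continuousWithinAt) (f' := f'') ?_ ?_
    · intro x hx
      rw [interior_Ioi] at hx
      exact ((hf'' x hx).hasDerivWithinAt)
    · intro x hx
      rw [interior_Ioi] at hx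
      exact (hf''pos x hx).le
  -- f' is unbounded
  have hub : ∀ b : ℝ, ∃ u : ℝ, 0 < u ∧ b < f' u := by
    intro b
    by_contra hcon
    push_neg at hcon
    have hb0 : 0 < b := lt_of_lt_of_le (hf'pos 1 one_pos) (hcon 1 one_pos)
    -- f s ≤ (f 1 + b) * s for s ≥ 1
    have hmono2 : MonotoneOn (fun s => b * s - f s) (Ioi (0:ℝ)) := by
      refine monotoneOn_of_hasDerivWithinAt_nonneg (convex_Ioi 0) ?_
        (f' := fun s => b - f' s) ?_ ?_
      · intro x hx
        exact (((hasDerivAt_id x).const_mul b).sub (hf' x hx)).continuousAt.continuousWithinAt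
      · intro x hx
        rw [interior_Ioi] at hx
        have := ((hasDerivAt_id x).const_mul b).sub (hf' x hx)
        simp only [mul_one, id_eq] at this
        exact this.hasDerivWithinAt
      · intro x hx
        rw [interior_Ioi] at hx
        have := hcon x hx
        show 0 ≤ b - f' x
        linarith
    set C := f 1 + b with hC
    have hC0 : 0 < C := by have := hfpos 1 one_pos; positivity
    have hfle : ∀ s : ℝ, 1 ≤ s → f s ≤ C * s := by
      intro s hs
      have h1 : (1:ℝ) ∈ Ioi (0:ℝ) := Set.mem_Ioi.2 one_pos
      have hs0 : s ∈ Ioi (0:ℝ) := Set.mem_Ioi.2 (lt_of_lt_of_le one_pos hs)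
      have := hmono2 h1 hs0 hs
      simp only [mul_one] at this
      have hf1 : f 1 ≤ f 1 * s := le_mul_of_one_le_right (hfpos 1 one_pos).le hs
      have hbs : b * s - f s ≥ b - f 1 := this
      nlinarith
    -- derive integrability of s⁻¹ on Ioi 1, contradiction
    have hint1 : IntegrableOn (fun s => 1 / f s) (Ioi (1:ℝ)) := hint 1 one_pos
    have hmeas : AEStronglyMeasurable (fun s : ℝ => C⁻¹ * s⁻¹)
        (volume.restrict (Ioi (1:ℝ))) := by
      refine (Measurable.aestronglyMeasurable ?_)
      exact (measurable_inv.const_mul _)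
    have hintC : IntegrableOn (fun s : ℝ => C⁻¹ * s⁻¹) (Ioi (1:ℝ)) := by
      refine hint1.mono' hmeas ?_
      filter_upwards [ae_restrict_mem measurableSet_Ioi] with s hs
      have hs1 : (1:ℝ) ≤ s := le_of_lt hs
      have hs0 : (0:ℝ) < s := lt_of_lt_of_le one_pos hs1
      have hfs : 0 < f s := hfpos s hs0
      have h1 : C⁻¹ * s⁻¹ = (C * s)⁻¹ := by rw [mul_inv]
      rw [Real.norm_eq_abs, abs_of_nonneg (by positivity), h1, one_div]
      exact inv_anti₀ hfs (hfle s hs1)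
    have : IntegrableOn (fun s : ℝ => s⁻¹) (Ioi (1:ℝ)) := by
      have h2 : IntegrableOn (fun x : ℝ => C * (C⁻¹ * x⁻¹)) (Ioi (1:ℝ)) :=
        hintC.const_mul C
      refine h2.congr_fun (fun s hs => ?_) measurableSet_Ioi
      show C * (C⁻¹ * s⁻¹) = s⁻¹
      rw [← mul_assoc, mul_inv_cancel₀ (ne_of_gt hC0), one_mul]
    exact not_IntegrableOn_Ioi_inv this
  -- f' tends to atTop
  have hf'top : Tendsto f' atTop atTop := by
    rw [tendsto_atTop]
    intro b
    obtain ⟨u₀, hu₀pos, hu₀⟩ := hub b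
    filter_upwards [eventually_ge_atTop u₀, eventually_gt_atTop (0:ℝ)] with x hx hx0
    exact hu₀.le.trans (hf'mono hu₀pos hx0 hx)
  -- F tends to 0
  have hF0 : Tendsto F atTop (nhds 0) := by
    have h1 : Tendsto (fun x => ∫ s in (1:ℝ)..x, 1 / f s) atTop (nhds (F 1)) :=
      intervalIntegral_tendsto_integral_Ioi 1 (hint 1 one_pos) tendsto_id
    have h2 : Tendsto (fun x => F 1 - ∫ s in (1:ℝ)..x, 1 / f s) atTop (nhds (F 1 - F 1)) :=
      tendsto_const_nhds.sub h1
    rw [sub_self] at h2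
    refine h2.congr' ?_
    filter_upwards [eventually_ge_atTop (1:ℝ)] with x hx
    have := hsplit 1 x one_pos hx
    linarith
  -- the two auxiliary functions and their monotonicity
  have hGd : ∀ q : ℝ, ∀ u > (0:ℝ), HasDerivAt (fun x => F x - q / f' x)
      (-(1 / f u) + q * f'' u / (f' u) ^ 2) u := by
    intro q u hu
    have h1 : HasDerivAt (fun x => q / f' x)
        ((0 * f' u - q * f'' u) / (f' u) ^ 2) u :=
      (hasDerivAt_const u q).div (hf'' u hu) (ne_of_gt (hf'pos u hu))
    have h2 := (hFd u hu).sub h1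
    convert h2 using 1
    · rfl
    · rfl
    · rfl
    ring
  have hGtendsto : ∀ q : ℝ, Tendsto (fun x => F x - q / f' x) atTop (nhds 0) := by
    intro q
    have h1 : Tendsto (fun x => q / f' x) atTop (nhds 0) :=
      tendsto_const_nhds.div_atTop hf'top
    have := hF0.sub h1
    simpa using this
  have hcontG : ∀ q : ℝ, ContinuousOn (fun x => F x - q / f' x) (Ioi (0:ℝ)) :=
    fun q x hx => ((hGd q x hx).continuousAt).continuousWithinAt
  intro u hu
  have hfu := hfpos u hu
  have hf'u := hf'pos u hu
  have hf''u := hf''pos u hu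
  constructor
  · -- lower bound: G₁ = F - q₁/f' is antitone, tends to 0, so G₁ u ≥ 0
    have hanti : AntitoneOn (fun x => F x - q₁ / f' x) (Ioi (0:ℝ)) := by
      refine antitoneOn_of_hasDerivWithinAt_nonpos (convex_Ioi 0) (hcontG q₁)
        (f' := fun x => -(1 / f x) + q₁ * f'' x / (f' x) ^ 2) ?_ ?_
      · intro x hx
        rw [interior_Ioi] at hx
        exact (hGd q₁ x hx).hasDerivWithinAt
      · intro x hx
        rw [interior_Ioi] at hx
        have hfx := hfpos x hx
        have hf'x := hf'pos x hx
        have hf''x := hf''pos x hx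
        have hk := (hq x hx).1
        rw [le_div_iff₀ (by positivity)] at hk
        rw [← sub_nonpos] at *
        have : q₁ * f'' x / (f' x) ^ 2 ≤ 1 / f x := by
          rw [div_le_div_iff₀ (by positivity) (by positivity)]
          nlinarith
        linarith
    have hge : (0:ℝ) ≤ F u - q₁ / f' u := by
      refine le_of_tendsto (hGtendsto q₁) ?_
      filter_upwards [eventually_ge_atTop u, eventually_gt_atTop (0:ℝ)] with x hx hx0
      exact hanti hu hx0 hx
    rw [sub_nonneg, div_le_iff₀ hf'u] at hge
    linarith [hge]
  · -- upper bound: G₂ = F - q₂/f' is monotone, tends to 0, so G₂ u ≤ 0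
    have hmono : MonotoneOn (fun x => F x - q₂ / f' x) (Ioi (0:ℝ)) := by
      refine monotoneOn_of_hasDerivWithinAt_nonneg (convex_Ioi 0) (hcontG q₂)
        (f' := fun x => -(1 / f x) + q₂ * f'' x / (f' x) ^ 2) ?_ ?_
      · intro x hx
        rw [interior_Ioi] at hx
        exact (hGd q₂ x hx).hasDerivWithinAt
      · intro x hx
        rw [interior_Ioi] at hx
        have hfx := hfpos x hx
        have hf'x := hf'pos x hx
        have hf''x := hf''pos x hx
        have hk := (hq x hx).2
        rw [div_le_iff₀ (by positivity)] at hk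
        have : 1 / f x ≤ q₂ * f'' x / (f' x) ^ 2 := by
          rw [div_le_div_iff₀ (by positivity) (by positivity)]
          nlinarith
        linarith
    have hle : F u - q₂ / f' u ≤ 0 := by
      refine ge_of_tendsto (hGtendsto q₂) ?_
      filter_upwards [eventually_ge_atTop u, eventually_gt_atTop (0:ℝ)] with x hx hx0
      exact hmono hu hx0 hx
    rw [sub_nonpos, le_div_iff₀ hf'u] at hle
    linarith [hle]
end

section
/- Let f : (0,∞) → ℝ be C¹ with f > 0, f' > 0 on (0,∞), and F(u) := ∫_u^∞ ds/f(s) finite for every u > 0. Suppose there exists u₀ > 0 and q_S > 1 such that f'(u)·F(u) ≤ q_S for all u ≥ u₀. Then the function u ↦ f(u)·F(u)^{q_S} is nonincreasing on [u₀, ∞), and there exists a constant C > 0 such that F(u) ≤ C·u^{-1/(q_S - 1)} for all sufficiently large u. -/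
theorem stmt_6 (f f' : ℝ → ℝ)
    (hf' : ∀ u > (0 : ℝ), HasDerivAt f (f' u) u)
    (hf'c : ContinuousOn f' (Set.Ioi 0))
    (hfpos : ∀ u > (0 : ℝ), 0 < f u)
    (hf'pos : ∀ u > (0 : ℝ), 0 < f' u)
    (hint : ∀ u > (0 : ℝ), MeasureTheory.IntegrableOn (fun s => 1 / f s) (Set.Ioi u))
    (F : ℝ → ℝ) (hF : ∀ u > (0 : ℝ), F u = ∫ s in Set.Ioi u, 1 / f s)
    (u₀ qS : ℝ) (hu₀ : 0 < u₀) (hqS : 1 < qS)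
    (hbound : ∀ u ≥ u₀, f' u * F u ≤ qS) :
    AntitoneOn (fun u => f u * (F u) ^ qS) (Set.Ici u₀) ∧
      ∃ C > (0 : ℝ), ∃ u₁ : ℝ, ∀ u ≥ u₁, F u ≤ C * u ^ (-(1 / (qS - 1))) := by
  have hfc : ContinuousOn f (Set.Ioi 0) := fun u hu =>
    (hf' u hu).continuousAt.continuousWithinAt
  have hinvc : ContinuousOn (fun s => 1 / f s) (Set.Ioi 0) :=
    ContinuousOn.div continuousOn_const hfc (fun u hu => (hfpos u hu).ne')
  -- F is positive
  have hFpos : ∀ u > (0 : ℝ), 0 < F u := by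
    intro u hu
    rw [hF u hu]
    have h1 : (0:ℝ) < ∫ s in u..(u+1), 1 / f s := by
      apply intervalIntegral.intervalIntegral_pos_of_pos_on
      · rw [intervalIntegrable_iff_integrableOn_Ioc_of_le (by linarith)]
        exact (hint u hu).mono_set Set.Ioc_subset_Ioi_self
      · intro x hx; exact div_pos one_pos (hfpos x (lt_trans hu hx.1))
      · linarith
    rw [intervalIntegral.integral_of_le (by linarith : u ≤ u+1)] at h1
    refine lt_of_lt_of_le h1 ?_
    apply MeasureTheory.setIntegral_mono_set (hint u hu)
    · filter_upwards [MeasureTheory.ae_restrict_mem measurableSet_Ioi] with x hx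
      exact le_of_lt (div_pos one_pos (hfpos x (lt_trans hu hx)))
    · exact HasSubset.Subset.eventuallyLE Set.Ioc_subset_Ioi_self
  -- F has derivative -(1/f u)
  have hFd : ∀ u > (0 : ℝ), HasDerivAt F (-(1 / f u)) u := by
    intro u hu
    set a := u/2 with ha
    have hapos : 0 < a := by positivity
    have hau : a < u := by linarith
    have key : ∀ x ∈ Set.Ioi a, F x = F a - ∫ t in a..x, 1 / f t := by
      intro x hx
      have hxpos : 0 < x := lt_trans hapos hx
      have hx' : a ≤ x := le_of_lt hx
      rw [hF x hxpos, hF a hapos, intervalIntegral.integral_of_le hx']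
      rw [← Set.Ioc_union_Ioi_eq_Ioi hx',
        MeasureTheory.setIntegral_union (Set.Ioc_disjoint_Ioi le_rfl) measurableSet_Ioi
          ((hint a hapos).mono_set Set.Ioc_subset_Ioi_self) (hint x hxpos)]
      ring
    have hd2 : HasDerivAt (fun x => F a - ∫ t in a..x, 1 / f t) (-(1 / f u)) u := by
      refine HasDerivAt.const_sub (F a) ?_
      apply intervalIntegral.integral_hasDerivAt_right
      · rw [intervalIntegrable_iff_integrableOn_Ioc_of_le (le_of_lt hau)]
        exact (hint a hapos).mono_set Set.Ioc_subset_Ioi_self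
      · exact hinvc.stronglyMeasurableAtFilter isOpen_Ioi u hu
      · exact hinvc.continuousAt (Ioi_mem_nhds hu)
    refine hd2.congr_of_eventuallyEq ?_
    filter_upwards [Ioi_mem_nhds hau] with x hx using key x hx
  -- the derivative of g := f * F ^ qS
  have hgd : ∀ u > (0 : ℝ), HasDerivAt (fun u => f u * F u ^ qS)
      (f' u * F u ^ qS + f u * (-(1 / f u) * qS * F u ^ (qS - 1))) u := by
    intro u hu
    exact (hf' u hu).mul ((hFd u hu).rpow_const (Or.inl (hFpos u hu).ne'))
  -- the derivative value rewritten
  have hval : ∀ u > (0 : ℝ), f' u * F u ^ qS + f u * (-(1 / f u) * qS * F u ^ (qS - 1))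
      = F u ^ (qS - 1) * (f' u * F u - qS) := by
    intro u hu
    have hFne : F u ≠ 0 := (hFpos u hu).ne'
    have hfne : f u ≠ 0 := (hfpos u hu).ne'
    have e1 : F u ^ qS = F u ^ (qS - 1) * F u := by
      rw [← Real.rpow_add_one hFne (qS - 1)]; ring_nf
    rw [e1]; field_simp; ring
  -- antitone part
  have hanti : AntitoneOn (fun u => f u * (F u) ^ qS) (Set.Ici u₀) := by
    apply antitoneOn_of_deriv_nonpos (convex_Ici u₀)
    · intro u hu
      have hu' : 0 < u := lt_of_lt_of_le hu₀ hu
      exact ((hgd u hu').continuousAt).continuousWithinAt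
    · intro u hu
      rw [interior_Ici] at hu
      have hu' : 0 < u := lt_trans hu₀ hu
      exact (hgd u hu').differentiableAt.differentiableWithinAt
    · intro u hu
      rw [interior_Ici] at hu
      have hu' : 0 < u := lt_trans hu₀ hu
      rw [(hgd u hu').deriv, hval u hu']
      apply mul_nonpos_of_nonneg_of_nonpos
      · exact le_of_lt (Real.rpow_pos_of_pos (hFpos u hu') _)
      · have := hbound u (le_of_lt hu)
        linarith
  refine ⟨hanti, ?_⟩
  -- decay part
  set M := f u₀ * F u₀ ^ qS with hMdef
  have hM : 0 < M := mul_pos (hfpos u₀ hu₀) (Real.rpow_pos_of_pos (hFpos u₀ hu₀) _)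
  set c := (qS - 1) / M with hcdef
  have hc : 0 < c := div_pos (by linarith) hM
  -- h := F ^ (1 - qS) - c * u is monotone on Ici u₀
  have hhd : ∀ u > (0 : ℝ), HasDerivAt (fun u => F u ^ (1 - qS) - c * u)
      (-(1 / f u) * (1 - qS) * F u ^ (1 - qS - 1) - c * 1) u := by
    intro u hu
    exact ((hFd u hu).rpow_const (Or.inl (hFpos u hu).ne')).sub
      ((hasDerivAt_id u).const_mul c)
  have hmono : MonotoneOn (fun u => F u ^ (1 - qS) - c * u) (Set.Ici u₀) := by
    apply monotoneOn_of_deriv_nonneg (convex_Ici u₀)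
    · intro u hu
      have hu' : 0 < u := lt_of_lt_of_le hu₀ hu
      exact ((hhd u hu').continuousAt).continuousWithinAt
    · intro u hu
      rw [interior_Ici] at hu
      have hu' : 0 < u := lt_trans hu₀ hu
      exact (hhd u hu').differentiableAt.differentiableWithinAt
    · intro u hu
      rw [interior_Ici] at hu
      have hu' : 0 < u := lt_trans hu₀ hu
      rw [(hhd u hu').deriv]
      have hFu := hFpos u hu'
      have hfu := hfpos u hu'
      have e2 : F u ^ (1 - qS - 1) = (F u ^ qS)⁻¹ := by
        rw [show (1 - qS - 1 : ℝ) = -qS by ring, Real.rpow_neg (le_of_lt hFu)]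
      rw [e2]
      have hle : f u * F u ^ qS ≤ M := hanti (Set.self_mem_Ici) (show u₀ ≤ u from le_of_lt hu) (show u₀ ≤ u from le_of_lt hu)
      have hpos : 0 < f u * F u ^ qS := mul_pos hfu (Real.rpow_pos_of_pos hFu _)
      have hinv : M⁻¹ ≤ (f u * F u ^ qS)⁻¹ := inv_anti₀ hpos hle
      have e3 : -(1 / f u) * (1 - qS) * (F u ^ qS)⁻¹ = (qS - 1) * (f u * F u ^ qS)⁻¹ := by
        field_simp; ring
      rw [e3, hcdef]
      rw [div_eq_mul_inv]
      have : (qS - 1) * M⁻¹ ≤ (qS - 1) * (f u * F u ^ qS)⁻¹ :=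
        mul_le_mul_of_nonneg_left hinv (by linarith)
      linarith
  -- conclude
  set p := 1 / (qS - 1) with hpdef
  have hp : 0 < p := one_div_pos.mpr (by linarith)
  set d := c / 2 with hddef
  have hd : 0 < d := half_pos hc
  refine ⟨(d⁻¹) ^ p, Real.rpow_pos_of_pos (inv_pos.mpr hd) p, 2 * u₀, ?_⟩
  intro u hu
  have hupos : 0 < u := by linarith
  have hu1 : u₀ ≤ u := by linarith
  have hFu := hFpos u hupos
  -- from monotonicity
  have h1 : F u₀ ^ (1 - qS) - c * u₀ ≤ F u ^ (1 - qS) - c * u :=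
    hmono Set.self_mem_Ici hu1 hu1
  have h2 : d * u ≤ F u ^ (1 - qS) := by
    have hF0 : 0 < F u₀ ^ (1 - qS) := Real.rpow_pos_of_pos (hFpos u₀ hu₀) _
    have : c * u - c * u₀ ≤ F u ^ (1 - qS) := by linarith
    have hcu : d * u ≤ c * u - c * u₀ := by
      rw [hddef]
      nlinarith
    linarith
  -- invert
  have e4 : F u ^ (1 - qS) = (F u ^ (qS - 1))⁻¹ := by
    rw [show (1 - qS : ℝ) = -(qS - 1) by ring, Real.rpow_neg (le_of_lt hFu)]
  rw [e4] at h2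
  have h3 : F u ^ (qS - 1) ≤ (d * u)⁻¹ := by
    have := inv_anti₀ (mul_pos hd hupos) h2
    rwa [inv_inv] at this
  have h4 : (F u ^ (qS - 1)) ^ p ≤ ((d * u)⁻¹) ^ p :=
    Real.rpow_le_rpow (le_of_lt (Real.rpow_pos_of_pos hFu _)) h3 (le_of_lt hp)
  have e5 : (F u ^ (qS - 1)) ^ p = F u := by
    rw [← Real.rpow_mul (le_of_lt hFu), hpdef, mul_one_div, div_self (by linarith : qS - 1 ≠ 0),
      Real.rpow_one]
  have e6 : ((d * u)⁻¹) ^ p = d⁻¹ ^ p * u ^ (-p) := by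
    rw [mul_inv, Real.mul_rpow (le_of_lt (inv_pos.mpr hd)) (le_of_lt (inv_pos.mpr hupos)),
      Real.inv_rpow (le_of_lt hupos), ← Real.rpow_neg (le_of_lt hupos)]
  rw [e5, e6] at h4
  exact h4
end

section
/- Let N ≥ 3 and let u : [0,∞) → ℝ be a C² solution of u'' + ((N-1)/r)·u' + f(u) = 0 for r > 0 with u(0) = α > 0, u'(0) = 0, and suppose u(r) > 0 for all r ≥ 0. Assume f is continuous, positive and increasing on (0,∞), with F(u) := ∫_u^∞ ds/f(s) < ∞ for u > 0. Then F(u(r)) ≥ r²/(2N) for all r ≥ 0. -/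
open MeasureTheory Set Topology

lemma ftcA (f : ℝ → ℝ) (hfc : ContinuousOn f (Set.Ioi 0))
    (hfpos : ∀ t > (0:ℝ), 0 < f t)
    (hint : ∀ t > (0:ℝ), MeasureTheory.IntegrableOn (fun s => 1 / f s) (Set.Ioi t))
    (t : ℝ) (ht : 0 < t) :
    HasDerivAt (fun x => ∫ s in Set.Ioi x, 1 / f s) (-(1 / f t)) t := by
  set a := t / 2 with ha
  have hat : a < t := by simp [ha]; linarith
  have ha0 : 0 < a := by positivity
  have hI := hint a ha0
  have hcontg : ContinuousOn (fun s => 1 / f s) (Set.Ioi 0) := by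
    intro x hx
    exact (continuousOn_const.div hfc (fun y hy => (hfpos y hy).ne')) x hx
  have hca : ContinuousAt (fun s => 1 / f s) t :=
    hcontg.continuousAt (Ioi_mem_nhds ht)
  have hmeas : StronglyMeasurableAtFilter (fun s => 1 / f s) (𝓝 t) volume :=
    hcontg.stronglyMeasurableAtFilter isOpen_Ioi t ht
  have hii : IntervalIntegrable (fun s => 1 / f s) volume a t := by
    refine intervalIntegrable_iff.mpr (hI.mono_set ?_)
    rw [Set.uIoc_of_le hat.le]
    exact Set.Ioc_subset_Ioi_self
  have hD : HasDerivAt (fun x => (∫ s in Set.Ioi a, 1 / f s) - ∫ y in a..x, 1 / f y)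
      (-(1 / f t)) t := by
    simpa using
      ((intervalIntegral.integral_hasDerivAt_right hii hmeas hca).const_sub
        (∫ s in Set.Ioi a, 1 / f s))
  refine hD.congr_of_eventuallyEq ?_
  filter_upwards [Ioi_mem_nhds hat] with x hx
  have hsplit : (∫ s in Set.Ioi a, 1 / f s)
      = (∫ s in Set.Ioc a x, 1 / f s) + ∫ s in Set.Ioi x, 1 / f s := by
    rw [← MeasureTheory.setIntegral_union (Set.Ioc_disjoint_Ioi le_rfl) measurableSet_Ioi
      (hI.mono_set Set.Ioc_subset_Ioi_self)
      (hI.mono_set (Set.Ioi_subset_Ioi hx.le)),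
      Set.Ioc_union_Ioi_eq_Ioi hx.le]
  rw [intervalIntegral.integral_of_le hx.le, hsplit]
  ring

theorem stmt_7 (N : ℕ) (hN : 3 ≤ N) (f : ℝ → ℝ)
    (hfc : ContinuousOn f (Set.Ioi 0))
    (hfpos : ∀ t > (0 : ℝ), 0 < f t)
    (hfmono : MonotoneOn f (Set.Ioi 0))
    (hint : ∀ t > (0 : ℝ), MeasureTheory.IntegrableOn (fun s => 1 / f s) (Set.Ioi t))
    (u u' u'' : ℝ → ℝ) (α : ℝ) (hα : 0 < α)
    (hu : ∀ r, HasDerivAt u (u' r) r)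
    (hu' : ∀ r, HasDerivAt u' (u'' r) r)
    (hode : ∀ r > (0 : ℝ), u'' r + ((N : ℝ) - 1) / r * u' r + f (u r) = 0)
    (hu0 : u 0 = α) (hu'0 : u' 0 = 0)
    (hupos : ∀ r ≥ (0 : ℝ), 0 < u r) :
    ∀ r ≥ (0 : ℝ), (∫ s in Set.Ioi (u r), 1 / f s) ≥ r ^ 2 / (2 * N) := by
  have hNsub : N - 1 + 1 = N := by omega
  have hNpos : (0:ℝ) < (N:ℝ) := by positivity
  set g : ℝ → ℝ := fun s => -(s ^ (N-1) * f (u s)) with hg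
  -- derivative of w r = r^(N-1) * u' r
  have hwd : ∀ s ≥ (0:ℝ), HasDerivAt (fun r => r ^ (N-1) * u' r) (g s) s := by
    intro s hs
    have hpow : HasDerivAt (fun r : ℝ => r ^ (N-1)) (((N-1:ℕ):ℝ) * s ^ (N-1-1)) s :=
      hasDerivAt_pow (N-1) s
    have hprod := hpow.mul (hu' s)
    rcases eq_or_lt_of_le hs with h0 | h0
    · have heq : ((N-1:ℕ):ℝ) * s ^ (N-1-1) * u' s + s ^ (N-1) * u'' s = g s := by
        rw [← h0]
        simp [hg, zero_pow (by omega : N - 1 - 1 ≠ 0), zero_pow (by omega : N - 1 ≠ 0), hu'0]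
      exact heq ▸ hprod
    · have hode' := hode s h0
      have hs' : s ^ (N-1-1) * s = s ^ (N-1) := by
        rw [← pow_succ]
        congr 1
        omega
      have heq : ((N-1:ℕ):ℝ) * s ^ (N-1-1) * u' s + s ^ (N-1) * u'' s = g s := by
        have hcast : ((N-1:ℕ):ℝ) = (N:ℝ) - 1 := by
          have h1 : (1:ℕ) ≤ N := by omega
          push_cast [h1]; ring
        rw [hcast, hg]
        have hdiv : ((N:ℝ) - 1) * s ^ (N-1-1) * u' s
            = s ^ (N-1) * (((N:ℝ) - 1) / s * u' s) := by
          rw [← hs']; field_simp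
        rw [hdiv]
        have hfe : u'' s + ((N:ℝ) - 1) / s * u' s = -f (u s) := by linarith
        calc s ^ (N-1) * (((N:ℝ)-1)/s * u' s) + s ^ (N-1) * u'' s
            = s ^ (N-1) * (u'' s + ((N:ℝ)-1)/s * u' s) := by ring
          _ = -(s ^ (N-1) * f (u s)) := by rw [hfe]; ring
      exact heq ▸ hprod
  -- continuity
  have hucont : Continuous u := by
    rw [continuous_iff_continuousAt]; exact fun x => (hu x).continuousAt
  have hfucont : ContinuousOn (fun s => f (u s)) (Set.Ici 0) :=
    hfc.comp hucont.continuousOn (fun y hy => hupos y hy)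
  have hgcont : ContinuousOn g (Set.Ici 0) :=
    (((continuous_pow (N-1)).continuousOn).mul hfucont).neg
  -- FTC for w
  have weq : ∀ r ≥ (0:ℝ), r ^ (N-1) * u' r = ∫ s in (0:ℝ)..r, g s := by
    intro r hr
    have hii : IntervalIntegrable g volume 0 r :=
      (hgcont.mono (by rw [Set.uIcc_of_le hr]; exact Set.Icc_subset_Ici_self)).intervalIntegrable
    have hfe : (∫ s in (0:ℝ)..r, g s)
        = r ^ (N-1) * u' r - 0 ^ (N-1) * u' 0 := by
      exact intervalIntegral.integral_eq_sub_of_hasDerivAt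
        (fun s hs => hwd s (by rw [Set.uIcc_of_le hr] at hs; exact hs.1)) hii
    rw [hfe, hu'0]
    ring
  -- u' ≤ 0 on [0, ∞)
  have hu'np : ∀ r ≥ (0:ℝ), u' r ≤ 0 := by
    intro r hr
    rcases eq_or_lt_of_le hr with h0 | h0
    · rw [← h0, hu'0]
    · have hIneg : (∫ s in (0:ℝ)..r, g s) ≤ 0 := by
        have h0' : 0 ≤ ∫ s in (0:ℝ)..r, -g s := by
          apply intervalIntegral.integral_nonneg h0.le
          intro x hx
          have h1 := hfpos (u x) (hupos x hx.1)
          have h2 : 0 ≤ x ^ (N-1) * f (u x) := mul_nonneg (pow_nonneg hx.1 _) h1.le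
          simp only [hg]; linarith
        rw [intervalIntegral.integral_neg] at h0'
        linarith
      have hweq := weq r hr
      nlinarith [pow_pos h0 (N-1)]
  -- u is antitone on [0, ∞)
  have hanti : AntitoneOn u (Set.Ici 0) := by
    apply antitoneOn_of_deriv_nonpos (convex_Ici 0) hucont.continuousOn
    · intro x hx; exact ((hu x).differentiableAt).differentiableWithinAt
    · intro x hx
      rw [interior_Ici] at hx
      rw [(hu x).deriv]
      exact hu'np x hx.le
  -- key estimate u' r ≤ -(r f(u r))/N
  have key : ∀ r > (0:ℝ), u' r ≤ -(r * f (u r)) / N := by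
    intro r hr
    have hfur : 0 < f (u r) := hfpos _ (hupos r hr.le)
    have hii : IntervalIntegrable g volume 0 r :=
      (hgcont.mono (by rw [Set.uIcc_of_le hr.le]; exact Set.Icc_subset_Ici_self)).intervalIntegrable
    have hii2 : IntervalIntegrable (fun s => -(s ^ (N-1) * f (u r))) volume 0 r := by
      apply ContinuousOn.intervalIntegrable
      exact (((continuous_pow (N-1)).continuousOn).mul continuousOn_const).neg
    have hmono_int : (∫ s in (0:ℝ)..r, g s) ≤ ∫ s in (0:ℝ)..r, -(s ^ (N-1) * f (u r)) := by
      apply intervalIntegral.integral_mono_on hr.le hii hii2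
      intro x hx
      have hx0 : (0:ℝ) ≤ x := hx.1
      have hur_le : u r ≤ u x := hanti hx0 hr.le hx.2
      have hff : f (u r) ≤ f (u x) := hfmono (hupos r hr.le) (hupos x hx0) hur_le
      have hxp : (0:ℝ) ≤ x ^ (N-1) := pow_nonneg hx0 _
      simp only [hg, neg_le_neg_iff]
      exact mul_le_mul_of_nonneg_left hff hxp
    have hRHS : (∫ s in (0:ℝ)..r, -(s ^ (N-1) * f (u r))) = -(f (u r) * (r ^ N / N)) := by
      have h1 : (∫ s in (0:ℝ)..r, -(s ^ (N-1) * f (u r)))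
          = -((∫ s in (0:ℝ)..r, s ^ (N-1)) * f (u r)) := by
        rw [← intervalIntegral.integral_mul_const, ← intervalIntegral.integral_neg]
      rw [h1, integral_pow, hNsub]
      rw [zero_pow (by omega : N ≠ 0)]
      have : ((N - 1 : ℕ) : ℝ) + 1 = (N:ℝ) := by
        have h1 : (1:ℕ) ≤ N := by omega
        push_cast [h1]; ring
      rw [this]
      ring
    have h1 : r ^ (N-1) * u' r ≤ -(f (u r) * (r ^ N / N)) := by
      rw [weq r hr.le, ← hRHS]; exact hmono_int
    have hrpow : 0 < r ^ (N-1) := pow_pos hr _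
    have hrN : r ^ N = r ^ (N-1) * r := by rw [← pow_succ, hNsub]
    refine le_of_mul_le_mul_left ?_ hrpow
    calc r ^ (N-1) * u' r ≤ -(f (u r) * (r ^ N / N)) := h1
      _ = r ^ (N-1) * (-(r * f (u r)) / N) := by rw [hrN]; ring
  -- derivative of G ∘ u
  set G : ℝ → ℝ := fun r => ∫ s in Set.Ioi (u r), 1 / f s with hGdef
  have hG : ∀ r ≥ (0:ℝ), HasDerivAt G (-(1 / f (u r)) * u' r) r := by
    intro r hr
    exact (ftcA f hfc hfpos hint (u r) (hupos r hr)).comp r (hu r)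
  have hH : ∀ r ≥ (0:ℝ), HasDerivAt (fun r => G r - r ^ 2 / (2 * N))
      (-(1 / f (u r)) * u' r - r / N) r := by
    intro r hr
    have h2 : HasDerivAt (fun r : ℝ => r ^ 2 / (2 * N)) (r / N) r := by
      have h3 := (hasDerivAt_pow 2 r).div_const (2 * N)
      refine h3.congr_deriv ?_
      push_cast
      ring
    exact (hG r hr).sub h2
  have hmono : MonotoneOn (fun r => G r - r ^ 2 / (2 * N)) (Set.Ici 0) := by
    apply monotoneOn_of_deriv_nonneg (convex_Ici 0)
    · intro x hx; exact ((hH x hx).continuousAt).continuousWithinAt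
    · intro x hx; rw [interior_Ici] at hx
      exact ((hH x hx.le).differentiableAt).differentiableWithinAt
    · intro x hx; rw [interior_Ici] at hx
      rw [(hH x hx.le).deriv]
      have hfux : 0 < f (u x) := hfpos _ (hupos x hx.le)
      have hkey := key x hx
      have h3 : u' x / f (u x) ≤ -(x / N) := by
        rw [div_le_iff₀ hfux]
        calc u' x ≤ -(x * f (u x)) / N := hkey
          _ = -(x / N) * f (u x) := by ring
      have h4 : -(1 / f (u x)) * u' x = -(u' x / f (u x)) := by ring
      rw [h4]
      linarith
  intro r hr
  have hle := hmono (self_mem_Ici) hr hr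
  have hG0 : 0 ≤ G 0 := by
    apply MeasureTheory.setIntegral_nonneg measurableSet_Ioi
    intro x hx
    have hx0 : 0 < x := lt_trans (hu0 ▸ hα) hx
    have := hfpos x hx0
    positivity
  have h00 : (0:ℝ) ^ 2 / (2 * (N:ℝ)) = 0 := by norm_num
  simp only [h00] at hle
  show G r ≥ r ^ 2 / (2 * N)
  linarith
end

section
/- Let N ≥ 3 and let w ∈ C²((0,R]) ∩ C¹([0,R]) satisfy w'' + ((N-1)/r)·w' + ((N-2)²/(4r²))·w > 0 for 0 < r < R, with w'(0) = 0 and w(0) > 0. Then w(r) > 0 for all 0 ≤ r ≤ R. -/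
theorem stmt_9 (N : ℕ) (hN : 3 ≤ N) (R : ℝ) (hR : 0 < R)
    (w w' w'' : ℝ → ℝ)
    (hw : ∀ r ∈ Set.Icc (0 : ℝ) R, HasDerivAt w (w' r) r)
    (hw' : ∀ r ∈ Set.Ioc (0 : ℝ) R, HasDerivAt w' (w'' r) r)
    (hw'cont : ContinuousOn w' (Set.Icc 0 R))
    (hineq : ∀ r ∈ Set.Ioo (0 : ℝ) R,
      0 < w'' r + ((N : ℝ) - 1) / r * w' r + ((N : ℝ) - 2) ^ 2 / (4 * r ^ 2) * w r)
    (h0 : w' 0 = 0) (h00 : 0 < w 0) :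
    ∀ r ∈ Set.Icc (0 : ℝ) R, 0 < w r := by
  set α : ℝ := ((N : ℝ) - 2) / 2 with hαdef
  have hN3 : (3 : ℝ) ≤ (N : ℝ) := by exact_mod_cast hN
  have hα : 0 < α := by simp only [hαdef]; linarith
  -- auxiliary function g r = r * u'(r) where u = r^α * w
  set g : ℝ → ℝ := fun r => α * (r ^ α * w r) + r ^ (α + 1) * w' r with hgdef
  have hwcont : ContinuousOn w (Set.Icc 0 R) :=
    fun r hr => (hw r hr).continuousAt.continuousWithinAt
  have hrpow : ∀ p : ℝ, 0 ≤ p → ContinuousOn (fun x : ℝ => x ^ p) (Set.Icc 0 R) := by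
    intro p hp
    exact continuousOn_id.rpow_const (fun x _ => Or.inr hp)
  have hgcont : ContinuousOn g (Set.Icc 0 R) := by
    exact (continuousOn_const.mul ((hrpow α hα.le).mul hwcont)).add
      ((hrpow (α + 1) (by linarith)).mul hw'cont)
  have hg0 : g 0 = 0 := by
    simp [hgdef, Real.zero_rpow hα.ne', Real.zero_rpow (by linarith : α + 1 ≠ 0)]
  -- derivative of g on the interior
  have hgderiv : ∀ r ∈ Set.Ioo (0 : ℝ) R, HasDerivAt g
      (r ^ (α + 1) * (w'' r + ((N : ℝ) - 1) / r * w' r +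
        ((N : ℝ) - 2) ^ 2 / (4 * r ^ 2) * w r)) r := by
    intro r hr
    have hr0 : 0 < r := hr.1
    have h1 : HasDerivAt (fun x : ℝ => x ^ α) (α * r ^ (α - 1)) r :=
      Real.hasDerivAt_rpow_const (Or.inl hr0.ne')
    have h2 : HasDerivAt (fun x : ℝ => x ^ (α + 1)) ((α + 1) * r ^ α) r := by
      have := Real.hasDerivAt_rpow_const (x := r) (p := α + 1) (Or.inl hr0.ne')
      simpa using this
    have hmem : r ∈ Set.Icc (0 : ℝ) R := ⟨hr0.le, hr.2.le⟩
    have hmem' : r ∈ Set.Ioc (0 : ℝ) R := ⟨hr0, hr.2.le⟩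
    have H := ((h1.mul (hw r hmem)).const_mul α).add (h2.mul (hw' r hmem'))
    convert H using 1
    case e'_4 => rfl
    case e'_5 => rfl
    case e'_8 => rfl
    have e1 : r ^ (α + 1) = r ^ α * r := by
      rw [Real.rpow_add hr0, Real.rpow_one]
    have e2 : r ^ α = r ^ (α - 1) * r := by
      rw [← Real.rpow_add_one hr0.ne' (α - 1)]; ring_nf
    have hNα : (N : ℝ) - 1 = 2 * α + 1 := by simp only [hαdef]; ring
    have hNα2 : ((N : ℝ) - 2) ^ 2 = 4 * α ^ 2 := by simp only [hαdef]; ring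
    rw [e1, e2, hNα, hNα2]
    field_simp
    ring
  have hgmono : StrictMonoOn g (Set.Icc 0 R) := by
    apply strictMonoOn_of_deriv_pos (convex_Icc 0 R) hgcont
    intro x hx
    rw [interior_Icc] at hx
    rw [(hgderiv x hx).deriv]
    exact mul_pos (Real.rpow_pos_of_pos hx.1 _) (hineq x hx)
  have hgpos : ∀ r ∈ Set.Ioc (0 : ℝ) R, 0 < g r := by
    intro r hr
    have := hgmono (Set.left_mem_Icc.mpr hR.le) ⟨hr.1.le, hr.2⟩ hr.1
    rwa [hg0] at this
  -- now u = r^α * w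
  set u : ℝ → ℝ := fun r => r ^ α * w r with hudef
  have hucont : ContinuousOn u (Set.Icc 0 R) := (hrpow α hα.le).mul hwcont
  have hu0 : u 0 = 0 := by simp [hudef, Real.zero_rpow hα.ne']
  have huderiv : ∀ r ∈ Set.Ioo (0 : ℝ) R, HasDerivAt u
      (α * r ^ (α - 1) * w r + r ^ α * w' r) r := by
    intro r hr
    have h1 : HasDerivAt (fun x : ℝ => x ^ α) (α * r ^ (α - 1)) r :=
      Real.hasDerivAt_rpow_const (Or.inl hr.1.ne')
    exact h1.mul (hw r ⟨hr.1.le, hr.2.le⟩)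
  have huderivpos : ∀ r ∈ Set.Ioo (0 : ℝ) R,
      0 < α * r ^ (α - 1) * w r + r ^ α * w' r := by
    intro r hr
    have hr0 : 0 < r := hr.1
    have hgr := hgpos r ⟨hr0, hr.2.le⟩
    have e1 : r ^ (α + 1) = r ^ α * r := by
      rw [Real.rpow_add hr0, Real.rpow_one]
    have e2 : r ^ α = r ^ (α - 1) * r := by
      rw [← Real.rpow_add_one hr0.ne' (α - 1)]; ring_nf
    have hfact : g r = r * (α * r ^ (α - 1) * w r + r ^ α * w' r) := by
      simp only [hgdef]
      rw [e1, e2]; ring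
    rw [hfact] at hgr
    by_contra h
    push_neg at h
    nlinarith
  have humono : StrictMonoOn u (Set.Icc 0 R) := by
    apply strictMonoOn_of_deriv_pos (convex_Icc 0 R) hucont
    intro x hx
    rw [interior_Icc] at hx
    rw [(huderiv x hx).deriv]
    exact huderivpos x hx
  intro r hr
  rcases eq_or_lt_of_le hr.1 with h | h
  · rw [← h]; exact h00
  · have hur : 0 < u r := by
      have := humono (Set.left_mem_Icc.mpr hR.le) hr h
      rwa [hu0] at this
    have hrpow' : 0 < r ^ α := Real.rpow_pos_of_pos h α
    simp only [hudef] at hur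
    by_contra hcon
    push_neg at hcon
    nlinarith
end

section
/- Under the scaling relation F(u(x)) = λ²·G(v(y)), y = x/λ, between C² functions u, v (with f, g, F, G as in the generalized scaling setup), one has the identity (1/f(u))·(Δu + f(u) - (f'(u)/f(u))|∇u|²) = (1/g(v))·(Δv + g(v) - (g'(v)/g(v))|∇v|²), where Laplacians and gradients are in the x and y variables respectively. -/
noncomputable def lap {N : ℕ} (u : EuclideanSpace ℝ (Fin N) → ℝ)
    (x : EuclideanSpace ℝ (Fin N)) : ℝ :=
  ∑ i : Fin N,
    fderiv ℝ (fun z => fderiv ℝ u z (EuclideanSpace.single i 1)) x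
      (EuclideanSpace.single i 1)

private lemma hasFDerivAt_fderiv_apply' {N : ℕ} (u : EuclideanSpace ℝ (Fin N) → ℝ)
    (hu : ContDiff ℝ 2 u) (x w : EuclideanSpace ℝ (Fin N)) :
    HasFDerivAt (fun z => fderiv ℝ u z w) ((fderiv ℝ (fderiv ℝ u) x).flip w) x := by
  have h := ((hu.fderiv_right (le_refl 2)).differentiable one_ne_zero x).hasFDerivAt
  have := h.clm_apply (hasFDerivAt_const w x)
  simpa using this

private lemma lap_eq' {N : ℕ} (u : EuclideanSpace ℝ (Fin N) → ℝ)
    (hu : ContDiff ℝ 2 u) (x : EuclideanSpace ℝ (Fin N)) :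
    lap u x
    = ∑ i : Fin N, fderiv ℝ (fderiv ℝ u) x (EuclideanSpace.single i 1)
        (EuclideanSpace.single i 1) := by
  refine Finset.sum_congr rfl fun i _ => ?_
  rw [(hasFDerivAt_fderiv_apply' u hu x _).fderiv]
  rfl

private lemma grad_sq' {N : ℕ} (u : EuclideanSpace ℝ (Fin N) → ℝ) (x : EuclideanSpace ℝ (Fin N)) :
    ‖gradient u x‖ ^ 2 = ∑ i : Fin N, (fderiv ℝ u x (EuclideanSpace.single i 1)) ^ 2 := by
  have h : ∀ i : Fin N, fderiv ℝ u x (EuclideanSpace.single i 1)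
      = (gradient u x : EuclideanSpace ℝ (Fin N)) i := by
    intro i
    have : (inner ℝ (gradient u x) (EuclideanSpace.single i (1:ℝ)) : ℝ)
        = fderiv ℝ u x (EuclideanSpace.single i 1) := by
      rw [gradient, InnerProductSpace.toDual_symm_apply]
    rw [← this, EuclideanSpace.inner_single_right]
    simp
  simp_rw [h]
  rw [EuclideanSpace.norm_eq, Real.sq_sqrt (Finset.sum_nonneg fun i _ => sq_nonneg _)]
  simp [sq_abs]

theorem stmt_15 (N : ℕ) (hN : 1 ≤ N)
    (f g f' g' F G : ℝ → ℝ) (lam : ℝ) (hlam : 0 < lam)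
    (hf' : ∀ t > (0 : ℝ), HasDerivAt f (f' t) t)
    (hg' : ∀ t, HasDerivAt g (g' t) t)
    (hfpos : ∀ t > (0 : ℝ), 0 < f t) (hgpos : ∀ t, 0 < g t)
    (hf'pos : ∀ t > (0 : ℝ), 0 < f' t) (hg'pos : ∀ t, 0 < g' t)
    (hF : ∀ t > (0 : ℝ), HasDerivAt F (-(1 / f t)) t)
    (hFpos : ∀ t > (0 : ℝ), 0 < F t)
    (hG : ∀ t, HasDerivAt G (-(1 / g t)) t)
    (hGpos : ∀ t, 0 < G t)
    (u v : EuclideanSpace ℝ (Fin N) → ℝ)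
    (hu : ContDiff ℝ 2 u) (hv : ContDiff ℝ 2 v)
    (hupos : ∀ x, 0 < u x)
    (hrel : ∀ x, F (u x) = lam ^ 2 * G (v (lam⁻¹ • x))) :
    ∀ x : EuclideanSpace ℝ (Fin N),
      (1 / f (u x)) *
          (lap u x + f (u x) - f' (u x) / f (u x) * ‖gradient u x‖ ^ 2)
        = (1 / g (v (lam⁻¹ • x))) *
            (lap v (lam⁻¹ • x) + g (v (lam⁻¹ • x))
              - g' (v (lam⁻¹ • x)) / g (v (lam⁻¹ • x))
                  * ‖gradient v (lam⁻¹ • x)‖ ^ 2) := by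
  have hl0 : lam ≠ 0 := hlam.ne'
  have hud : ∀ x, HasFDerivAt u (fderiv ℝ u x) x :=
    fun x => (hu.differentiable two_ne_zero x).hasFDerivAt
  have hvd : ∀ y, HasFDerivAt v (fderiv ℝ v y) y :=
    fun y => (hv.differentiable two_ne_zero y).hasFDerivAt
  have hσ : ∀ x : EuclideanSpace ℝ (Fin N),
      HasFDerivAt (fun z : EuclideanSpace ℝ (Fin N) => lam⁻¹ • z)
        (lam⁻¹ • ContinuousLinearMap.id ℝ (EuclideanSpace ℝ (Fin N))) x :=
    fun x => (hasFDerivAt_id x).const_smul lam⁻¹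
  have hinner : ∀ x : EuclideanSpace ℝ (Fin N),
      HasFDerivAt (fun x : EuclideanSpace ℝ (Fin N) => v (lam⁻¹ • x))
        ((fderiv ℝ v (lam⁻¹ • x)).comp
          (lam⁻¹ • ContinuousLinearMap.id ℝ (EuclideanSpace ℝ (Fin N)))) x :=
    fun x => (hvd (lam⁻¹ • x)).comp x (hσ x)
  -- first-order relation
  have first : ∀ (x : EuclideanSpace ℝ (Fin N)) (i : Fin N),
      (1 / f (u x)) * fderiv ℝ u x (EuclideanSpace.single i 1)
      = lam * ((1 / g (v (lam⁻¹ • x))) *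
          fderiv ℝ v (lam⁻¹ • x) (EuclideanSpace.single i 1)) := by
    intro x i
    set y := lam⁻¹ • x with hy
    have hL : HasFDerivAt (fun x => F (u x)) ((-(1 / f (u x))) • fderiv ℝ u x) x :=
      (hF (u x) (hupos x)).comp_hasFDerivAt x (hud x)
    have hR : HasFDerivAt (fun x : EuclideanSpace ℝ (Fin N) => lam ^ 2 * G (v (lam⁻¹ • x)))
        ((lam ^ 2) • ((-(1 / g (v y))) •
          ((fderiv ℝ v y).comp
            (lam⁻¹ • ContinuousLinearMap.id ℝ (EuclideanSpace ℝ (Fin N)))))) x :=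
      ((hG (v y)).comp_hasFDerivAt x (hinner x)).const_mul (lam ^ 2)
    have hfun : (fun x => F (u x))
        = (fun x : EuclideanSpace ℝ (Fin N) => lam ^ 2 * G (v (lam⁻¹ • x))) := funext hrel
    have heq := hL.unique (hfun ▸ hR)
    have h2 := congrFun (congrArg (fun (T : _ →L[ℝ] ℝ) => (T : _ → ℝ)) heq)
      (EuclideanSpace.single i 1)
    simp only [ContinuousLinearMap.smul_apply, ContinuousLinearMap.comp_apply,
      ContinuousLinearMap.coe_smul', Pi.smul_apply, ContinuousLinearMap.coe_id', id_eq,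
      map_smul, smul_eq_mul, neg_mul] at h2
    have hf0 : f (u x) ≠ 0 := (hfpos _ (hupos x)).ne'
    have hg0 : g (v y) ≠ 0 := (hgpos _).ne'
    field_simp at h2 ⊢
    refine mul_left_cancel₀ hl0 ?_
    linear_combination (-lam) * h2
  -- second-order relation
  have key : ∀ (x : EuclideanSpace ℝ (Fin N)) (i : Fin N),
      (1 / f (u x)) * fderiv ℝ (fderiv ℝ u) x (EuclideanSpace.single i 1)
          (EuclideanSpace.single i 1)
        - f' (u x) / f (u x) ^ 2 * (fderiv ℝ u x (EuclideanSpace.single i 1)) ^ 2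
      = (1 / g (v (lam⁻¹ • x))) * fderiv ℝ (fderiv ℝ v) (lam⁻¹ • x)
          (EuclideanSpace.single i 1) (EuclideanSpace.single i 1)
        - g' (v (lam⁻¹ • x)) / g (v (lam⁻¹ • x)) ^ 2
            * (fderiv ℝ v (lam⁻¹ • x) (EuclideanSpace.single i 1)) ^ 2 := by
    intro x i
    set y := lam⁻¹ • x with hy
    have hf0 : f (u x) ≠ 0 := (hfpos _ (hupos x)).ne'
    have hg0 : g (v y) ≠ 0 := (hgpos _).ne'
    have h1 : HasFDerivAt (fun x => 1 / f (u x))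
        ((-f' (u x) / f (u x) ^ 2) • fderiv ℝ u x) x := by
      have := ((hf' (u x) (hupos x)).inv hf0).comp_hasFDerivAt x (hud x)
      simpa [one_div, Function.comp_def] using this
    have h2 := hasFDerivAt_fderiv_apply' u hu x (EuclideanSpace.single i 1)
    have hA := h1.mul h2
    have hp : HasFDerivAt (fun x : EuclideanSpace ℝ (Fin N) => 1 / g (v (lam⁻¹ • x)))
        ((-g' (v y) / g (v y) ^ 2) • ((fderiv ℝ v y).comp
          (lam⁻¹ • ContinuousLinearMap.id ℝ (EuclideanSpace ℝ (Fin N))))) x := by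
      have := ((hg' (v y)).inv hg0).comp_hasFDerivAt x (hinner x)
      simpa [one_div, Function.comp_def] using this
    have hq : HasFDerivAt
        (fun x : EuclideanSpace ℝ (Fin N) => fderiv ℝ v (lam⁻¹ • x) (EuclideanSpace.single i 1))
        (((fderiv ℝ (fderiv ℝ v) y).flip (EuclideanSpace.single i 1)).comp
          (lam⁻¹ • ContinuousLinearMap.id ℝ (EuclideanSpace ℝ (Fin N)))) x :=
      by have := (hasFDerivAt_fderiv_apply' v hv y (EuclideanSpace.single i 1)).comp x (hσ x); exact this
    have hB := (hp.mul hq).const_mul lam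
    have hfun : (fun x => (1 / f (u x)) * fderiv ℝ u x (EuclideanSpace.single i 1))
        = (fun x : EuclideanSpace ℝ (Fin N) => lam * ((1 / g (v (lam⁻¹ • x))) *
            fderiv ℝ v (lam⁻¹ • x) (EuclideanSpace.single i 1))) :=
      funext fun x => first x i
    have heq := hA.unique (hfun ▸ hB)
    have h3 := congrFun (congrArg (fun (T : _ →L[ℝ] ℝ) => (T : _ → ℝ)) heq)
      (EuclideanSpace.single i 1)
    simp only [ContinuousLinearMap.add_apply, ContinuousLinearMap.smul_apply,
      ContinuousLinearMap.comp_apply, ContinuousLinearMap.coe_smul', Pi.smul_apply,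
      ContinuousLinearMap.coe_id', id_eq, map_smul, smul_eq_mul, neg_mul,
      ContinuousLinearMap.flip_apply] at h3
    rw [show lam⁻¹ • x = y from rfl] at h3
    have hli : lam * lam⁻¹ = 1 := mul_inv_cancel₀ hl0
    linear_combination h3 + ((1 / g (v y)) * fderiv ℝ (fderiv ℝ v) y (EuclideanSpace.single i 1)
        (EuclideanSpace.single i 1)
      - g' (v y) / g (v y) ^ 2 * (fderiv ℝ v y (EuclideanSpace.single i 1)) ^ 2) * hli
  intro x
  set y := lam⁻¹ • x with hy
  have hf0 : f (u x) ≠ 0 := (hfpos _ (hupos x)).ne'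
  have hg0 : g (v y) ≠ 0 := (hgpos _).ne'
  have H := Finset.sum_congr rfl (fun i (_ : i ∈ Finset.univ) => key x i)
  rw [Finset.sum_sub_distrib, Finset.sum_sub_distrib, ← Finset.mul_sum, ← Finset.mul_sum,
    ← Finset.mul_sum, ← Finset.mul_sum, ← lap_eq' u hu x, ← lap_eq' v hv y,
    ← grad_sq' u x, ← grad_sq' v y] at H
  have e1 : (1 / f (u x)) *
      (lap u x + f (u x) - f' (u x) / f (u x) * ‖gradient u x‖ ^ 2)
      = ((1 / f (u x)) * lap u x - f' (u x) / f (u x) ^ 2 * ‖gradient u x‖ ^ 2) + 1 := by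
    field_simp
    ring
  have e2 : (1 / g (v y)) *
      (lap v y + g (v y) - g' (v y) / g (v y) * ‖gradient v y‖ ^ 2)
      = ((1 / g (v y)) * lap v y - g' (v y) / g (v y) ^ 2 * ‖gradient v y‖ ^ 2) + 1 := by
    field_simp
    ring
  rw [e1, e2, H]
end

section
/- Let f be C¹ on (0,∞) with f > 0, f' > 0 and finite tail F(u) = ∫_u^∞ ds/f(s). Suppose the limits p₀ = lim_{u→0⁺} u·f'(u)/f(u) and q₀ = lim_{u→0⁺} f'(u)·F(u) both exist, are finite, and satisfy p₀ > 1, q₀ > 1, f(u) → 0 and F(u) → ∞ as u → 0⁺. Then 1/p₀ + 1/q₀ = 1. -/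
open Set Filter MeasureTheory intervalIntegral Topology

theorem stmt_18 (f f' F : ℝ → ℝ) (p₀ q₀ : ℝ)
    (hf' : ∀ u > (0 : ℝ), HasDerivAt f (f' u) u)
    (hf'c : ContinuousOn f' (Set.Ioi 0))
    (hfpos : ∀ u > (0 : ℝ), 0 < f u)
    (hf'pos : ∀ u > (0 : ℝ), 0 < f' u)
    (hf0 : Filter.Tendsto f (nhdsWithin 0 (Set.Ioi 0)) (nhds 0))
    (hFint : ∀ u > (0 : ℝ), MeasureTheory.IntegrableOn (fun s => 1 / f s) (Set.Ioi u))
    (hF : ∀ u > (0 : ℝ), F u = ∫ s in Set.Ioi u, 1 / f s)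
    (hFinf : Filter.Tendsto F (nhdsWithin 0 (Set.Ioi 0)) Filter.atTop)
    (hp : 1 < p₀) (hq : 1 < q₀)
    (hp0 : Filter.Tendsto (fun u => u * f' u / f u)
      (nhdsWithin 0 (Set.Ioi 0)) (nhds p₀))
    (hq0 : Filter.Tendsto (fun u => f' u * F u)
      (nhdsWithin 0 (Set.Ioi 0)) (nhds q₀)) :
    1 / p₀ + 1 / q₀ = 1 := by
  have hp0' : (0:ℝ) < p₀ := by linarith
  -- continuity of 1/f on Ioi 0
  have hinvc : ContinuousOn (fun s => 1 / f s) (Ioi 0) := fun x hx =>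
    ((continuousAt_const.div (hf' x hx).continuousAt (hfpos x hx).ne')).continuousWithinAt
  -- identity F x = F a - ∫ a..x
  have key : ∀ a x : ℝ, 0 < a → 0 < x → F x = F a - ∫ t in a..x, 1 / f t := by
    have base : ∀ a x : ℝ, 0 < a → a ≤ x → F x = F a - ∫ t in a..x, 1 / f t := by
      intro a x ha hax
      have hx : 0 < x := lt_of_lt_of_le ha hax
      rw [hF a ha, hF x hx, intervalIntegral.integral_of_le hax]
      have hsplit : (∫ s in Ioi a, 1 / f s)
          = (∫ s in Ioc a x, 1 / f s) + ∫ s in Ioi x, 1 / f s := by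
        rw [← Set.Ioc_union_Ioi_eq_Ioi hax]
        rw [MeasureTheory.setIntegral_union Set.Ioc_disjoint_Ioi_same measurableSet_Ioi
          ((hFint a ha).mono_set (by rw [← Set.Ioc_union_Ioi_eq_Ioi hax]; exact Set.subset_union_left))
          ((hFint a ha).mono_set (by rw [← Set.Ioc_union_Ioi_eq_Ioi hax]; exact Set.subset_union_right))]
      linarith [hsplit]
    intro a x ha hx
    rcases le_total a x with h | h
    · exact base a x ha h
    · have h1 := base x a hx h
      have h2 : (∫ t in a..x, 1 / f t) = -∫ t in x..a, 1 / f t :=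
        intervalIntegral.integral_symm x a
      linarith [h1, h2]
  -- derivative of F
  have hFd : ∀ u > (0:ℝ), HasDerivAt F (-(1 / f u)) u := by
    intro u hu
    have hc : 0 < u / 2 := by linarith
    have hsub : Set.uIcc (u/2) u ⊆ Ioi 0 := by
      rw [Set.uIcc_of_le (by linarith)]
      intro t ht; exact lt_of_lt_of_le hc ht.1
    have hii : IntervalIntegrable (fun s => 1 / f s) volume (u/2) u :=
      (hinvc.mono hsub).intervalIntegrable
    have hmeas : StronglyMeasurableAtFilter (fun s => 1 / f s) (𝓝 u) volume :=
      hinvc.stronglyMeasurableAtFilter isOpen_Ioi u hu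
    have hcont : ContinuousAt (fun s => 1 / f s) u :=
      continuousAt_const.div (hf' u hu).continuousAt (hfpos u hu).ne'
    have hder : HasDerivAt (fun x => F (u/2) - ∫ t in (u/2)..x, 1 / f t) (-(1 / f u)) u :=
      (intervalIntegral.integral_hasDerivAt_right hii hmeas hcont).const_sub (F (u/2))
    refine hder.congr_of_eventuallyEq ?_
    filter_upwards [IsOpen.mem_nhds isOpen_Ioi (show u ∈ Ioi (0:ℝ) from hu)] with x hx
    exact key (u/2) x hc hx
  -- derivative of G = f * F
  have hGd : ∀ u > (0:ℝ), HasDerivAt (fun x => f x * F x) (f' u * F u - 1) u := by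
    intro u hu
    have h := (hf' u hu).mul (hFd u hu)
    have : f' u * F u + f u * -(1 / f u) = f' u * F u - 1 := by
      rw [mul_neg, mul_one_div, div_self (hfpos u hu).ne']; ring
    rwa [this] at h
  have hmem : ∀ᶠ x in 𝓝[>] (0:ℝ), x ∈ Ioi (0:ℝ) := eventually_mem_nhdsWithin
  -- fF/u → q₀/p₀
  have hratio : Tendsto (fun u => f u * F u / u) (𝓝[>] (0:ℝ)) (𝓝 (q₀ / p₀)) := by
    have h1 : Tendsto (fun u => f' u * F u * (u * f' u / f u)⁻¹) (𝓝[>] (0:ℝ))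
        (𝓝 (q₀ * p₀⁻¹)) := hq0.mul (hp0.inv₀ (by positivity))
    rw [div_eq_mul_inv]
    refine h1.congr' ?_
    filter_upwards [hmem] with u hu
    have hu' : (0:ℝ) < u := hu
    field_simp [(hfpos u hu').ne', (hf'pos u hu').ne', hu'.ne']
  -- fF → 0
  have hG0 : Tendsto (fun u => f u * F u) (𝓝[>] (0:ℝ)) (𝓝 0) := by
    have h2 : Tendsto (fun u => f u * F u / u * u) (𝓝[>] (0:ℝ)) (𝓝 (q₀ / p₀ * 0)) :=
      hratio.mul (tendsto_id.mono_left nhdsWithin_le_nhds)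
    rw [mul_zero] at h2
    refine h2.congr' ?_
    filter_upwards [hmem] with u hu
    have hu' : (0:ℝ) < u := hu
    field_simp
  -- L'Hopital
  have hlh : Tendsto (fun u => f u * F u / u) (𝓝[>] (0:ℝ)) (𝓝 (q₀ - 1)) := by
    have hgg' : ∀ᶠ x in 𝓝[>] (0:ℝ), HasDerivAt (fun y : ℝ => y) (1:ℝ) x := by
      filter_upwards with x; exact hasDerivAt_id x
    have hff' : ∀ᶠ x in 𝓝[>] (0:ℝ), HasDerivAt (fun y => f y * F y) (f' x * F x - 1) x := by
      filter_upwards [hmem] with x hx; exact hGd x hx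
    have hg' : ∀ᶠ x in 𝓝[>] (0:ℝ), (1:ℝ) ≠ 0 := by filter_upwards with x; norm_num
    have hga : Tendsto (fun y : ℝ => y) (𝓝[>] (0:ℝ)) (𝓝 0) :=
      tendsto_id.mono_left nhdsWithin_le_nhds
    have hdiv : Tendsto (fun x => (f' x * F x - 1) / 1) (𝓝[>] (0:ℝ)) (𝓝 (q₀ - 1)) := by
      simpa using hq0.sub tendsto_const_nhds
    exact HasDerivAt.lhopital_zero_nhdsGT hff' hgg' hg' hG0 hga hdiv
  have heq : q₀ / p₀ = q₀ - 1 := tendsto_nhds_unique hratio hlh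
  have hq0' : (0:ℝ) < q₀ := by linarith
  field_simp at heq ⊢
  nlinarith [heq]
end
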